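/- Let F be a finite abelian group in which every element has order dividing 2, let p ∈ ℤ[1/2][F] satisfy p² = p, let k be a field with char(k) ≠ 2, and let ρ(p) ∈ k[F] be the image of p under the map induced by the canonical ring homomorphism ℤ[1/2] → k. Then the dimension over k of the k-linear span of {ρ(p)·a : a ∈ F} inside k[F] equals the number of group homomorphisms χ : F → {1,−1} with Σ_{a∈F} p_a·χ(a) = 1, where p = Σ_{a∈F} p_a·a. -/

import Mathlib

/-- `ℤ[1/2]`: the subring of `ℚ` of rationals whose denominator is a power of `2`. -/
def Zhalf : Subring ℚ where
  carrier := {q : ℚ | ∃ (m : ℤ) (n : ℕ), q = (m : ℚ) / 2 ^ n}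
  zero_mem' := ⟨0, 0, by norm_num⟩
  one_mem' := ⟨1, 0, by norm_num⟩
  add_mem' := by
    rintro a b ⟨m, n, rfl⟩ ⟨m', n', rfl⟩
    exact ⟨m * 2 ^ n' + m' * 2 ^ n, n + n', by push_cast [pow_add]; field_simp⟩
  mul_mem' := by
    rintro a b ⟨m, n, rfl⟩ ⟨m', n', rfl⟩
    exact ⟨m * m', n + n', by push_cast [pow_add]; field_simp⟩
  neg_mem' := by
    rintro a ⟨m, n, rfl⟩
    exact ⟨-m, n, by push_cast; ring⟩

/-- `o(p)`: the multiplicative order of `2` modulo `p`. -/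
noncomputable def oOrd (p : ℕ) : ℕ := orderOf (2 : ZMod p)

/-- `L(p)`: the set of `x` with `2 ≤ x ≤ p+1` congruent mod `p` to a power of `2`. -/
noncomputable def Lset (p : ℕ) : Finset ℕ :=
  letI : DecidablePred fun x : ℕ => ∃ i : ℕ, (2 : ZMod p) ^ i = (x : ZMod p) :=
    fun _ => Classical.propDecidable _
  (Finset.Icc 2 (p + 1)).filter fun x => ∃ i : ℕ, (2 : ZMod p) ^ i = (x : ZMod p)

/-- `r(p,x)`: the least natural number `r` with `2^r ≡ x (mod p)`. -/
noncomputable def rpx (p x : ℕ) : ℕ := sInf {r : ℕ | (2 : ZMod p) ^ r = (x : ZMod p)}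

/-- The value `F(p)` from the paper. -/
noncomputable def Fval (p : ℕ) : ℝ :=
  47 / 64 + (1 / 128) * (1 / (2 ^ oOrd p - 1)) +
    (1 / 64) * (2 ^ p / (2 ^ p - 1)) * ((2 : ℝ) ^ oOrd p / (2 ^ oOrd p - 1)) *
      ∑ x ∈ Lset p, (1 : ℝ) / 2 ^ (x + rpx p x)

/-- coefficient reduction of group-ring elements along `c : ℤ[1/2] →+* k` -/
noncomputable def mapCoeffs {k : Type*} [Field k] {A : Type*} (c : Zhalf →+* k)
    (p : MonoidAlgebra Zhalf A) : MonoidAlgebra k A :=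
  MonoidAlgebra.ofCoeff (Finsupp.mapRange ⇑c (map_zero c) p.coeff)


namespace S14

/-- the sign character `Multiplicative (ZMod 2) →* K`. -/
def sgn (K : Type*) [Ring K] : Multiplicative (ZMod 2) →* K where
  toFun z := if z.toAdd = 0 then 1 else -1
  map_one' := by simp
  map_mul' x y := by
    have h2 : ∀ z : ZMod 2, z = 0 ∨ z = 1 := by decide
    have hxy : (x * y).toAdd = x.toAdd + y.toAdd := rfl
    have e1 : (1 : ZMod 2) + 1 = 0 := by decide
    have e2 : (1 : ZMod 2) ≠ 0 := by decide
    rcases h2 x.toAdd with hx | hx <;> rcases h2 y.toAdd with hy | hy <;>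
      simp only [hxy, hx, hy, add_zero, zero_add, e1, if_pos rfl, if_neg e2] <;> norm_num

lemma sgn_one_or (K : Type*) [Ring K] (z : Multiplicative (ZMod 2)) :
    sgn K z = 1 ∨ sgn K z = -1 := by
  unfold sgn; dsimp; split <;> simp

lemma sgn_mul_self (K : Type*) [Ring K] (z : Multiplicative (ZMod 2)) :
    sgn K z * sgn K z = 1 := by
  rcases sgn_one_or K z with h | h <;> rw [h] <;> norm_num

lemma map_sgn {K L : Type*} [Ring K] [Ring L] (f : K →+* L) (z : Multiplicative (ZMod 2)) :
    f (sgn K z) = sgn L z := by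
  unfold sgn; dsimp; split <;> simp

lemma sgn_eq_one_iff {K : Type*} [Ring K] (h : (-1 : K) ≠ 1) (z : Multiplicative (ZMod 2)) :
    sgn K z = 1 ↔ z = 1 := by
  unfold sgn; dsimp
  constructor
  · intro hz
    by_contra hne
    have : z.toAdd ≠ 0 := fun h0 => hne (by
      have : z = Multiplicative.ofAdd 0 := by
        rcases z with z; exact congrArg Multiplicative.ofAdd h0
      simpa using this)
    rw [if_neg this] at hz
    exact h hz
  · rintro rfl; simp


/-- the character group -/
abbrev Chi (F : Type) [CommGroup F] := F →* Multiplicative (ZMod 2)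

noncomputable instance (F : Type) [CommGroup F] [Fintype F] : Fintype (Chi F) := by
  have : Finite (Chi F) := Finite.of_injective _ (DFunLike.coe_injective (F := Chi F))
  exact Fintype.ofFinite _

variable {F : Type} [CommGroup F] [Fintype F]

/-- the k-valued character associated to `φ` -/
def chiK (K : Type*) [CommRing K] (φ : Chi F) : F →* K := (sgn K).comp φ

/-- the value `S(φ) = Σ p_a χ_φ(a)` as an element of `Zhalf` -/
noncomputable def Sval (p : MonoidAlgebra Zhalf F) (φ : Chi F) : Zhalf :=
  MonoidAlgebra.lift Zhalf Zhalf F (chiK Zhalf φ) p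

lemma Sval_eq_sum (p : MonoidAlgebra Zhalf F) (φ : Chi F) :
    Sval p φ = ∑ a : F, p.coeff a * sgn Zhalf (φ a) := by
  rw [Sval, MonoidAlgebra.lift_apply]
  rw [Finsupp.sum_fintype]
  · rfl
  · intro a; simp

lemma Sval_idem {p : MonoidAlgebra Zhalf F} (hp : p * p = p) (φ : Chi F) :
    Sval p φ = 0 ∨ Sval p φ = 1 := by
  have h : Sval p φ * Sval p φ = Sval p φ := by
    unfold Sval; rw [← map_mul, hp]
  have := mul_self_eq_zero (a := Sval p φ - 1)
  rcases mul_eq_zero.1 (show Sval p φ * (Sval p φ - 1) = 0 by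
    rw [mul_sub, h, mul_one, sub_self]) with h0 | h1
  · exact Or.inl h0
  · exact Or.inr (by linear_combination h1)


lemma sgn_ofAdd_one (K : Type*) [Ring K] :
    sgn K (Multiplicative.ofAdd (1 : ZMod 2)) = -1 := by
  unfold sgn
  simp only [MonoidHom.coe_mk, OneHom.coe_mk]
  rw [if_neg (by decide)]

lemma mult_two_cases (z : Multiplicative (ZMod 2)) :
    z = 1 ∨ z = Multiplicative.ofAdd 1 := by
  revert z; decide

/-- the equivalence between `Chi F` and rational characters -/
noncomputable def chiEquiv (hF : ∀ a : F, a ^ 2 = 1) : Chi F ≃ (F →* ℚ) where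
  toFun φ := chiK ℚ φ
  invFun χ :=
    { toFun := fun a => if χ a = 1 then 1 else Multiplicative.ofAdd 1
      map_one' := by simp
      map_mul' := fun a b => by
        have hval : ∀ x : F, χ x = 1 ∨ χ x = -1 := fun x =>
          mul_self_eq_one_iff.1 (by rw [← map_mul, ← pow_two, hF, map_one])
        rcases hval a with ha | ha <;> rcases hval b with hb | hb <;>
          simp only [map_mul, ha, hb] <;> norm_num <;> decide }
  left_inv φ := by
    ext a
    dsimp [chiK]
    have hneg : (-1 : ℚ) ≠ 1 := by norm_num
    rcases mult_two_cases (φ a) with h | h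
    · simp only [h]; rw [if_pos (map_one (sgn ℚ))]
    · simp only [h]; rw [if_neg (by rw [sgn_ofAdd_one]; norm_num)]
  right_inv χ := by
    ext a
    have hval : ∀ x : F, χ x = 1 ∨ χ x = -1 := fun x =>
      mul_self_eq_one_iff.1 (by rw [← map_mul, ← pow_two, hF, map_one])
    dsimp [chiK]
    rcases hval a with ha | ha
    · rw [ha, if_pos rfl, map_one]
    · rw [ha, if_neg (by norm_num), sgn_ofAdd_one]

lemma sum_chi_eq (p : MonoidAlgebra Zhalf F) (φ : Chi F) :
    ∑ a : F, ((p.coeff a : ℚ) * chiK ℚ φ a) = ((Sval p φ : Zhalf) : ℚ) := by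
  rw [Sval_eq_sum]
  push_cast
  refine Finset.sum_congr rfl fun a _ => ?_
  congr 1
  exact (map_sgn (Zhalf.subtype) (φ a)).symm

lemma card_eq (hF : ∀ a : F, a ^ 2 = 1) (p : MonoidAlgebra Zhalf F) :
    Nat.card {χ : F →* ℚ //
        (∀ a : F, χ a = 1 ∨ χ a = -1) ∧ ∑ a : F, ((p.coeff a : ℚ) * χ a) = 1}
      = Nat.card {φ : Chi F // Sval p φ = 1} := by
  refine (Nat.card_congr ((chiEquiv hF).subtypeEquiv fun φ => ?_)).symm
  constructor
  · intro h
    refine ⟨fun a => sgn_one_or ℚ (φ a), ?_⟩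
    rw [show (chiEquiv hF φ : F →* ℚ) = chiK ℚ φ from rfl]
    rw [sum_chi_eq p φ, h]
    norm_num
  · rintro ⟨-, h⟩
    rw [show (chiEquiv hF φ : F →* ℚ) = chiK ℚ φ from rfl] at h
    rw [sum_chi_eq p φ] at h
    exact_mod_cast h


lemma two_nsmul_additive (hF : ∀ a : F, a ^ 2 = 1) (x : Additive F) : (2 : ℕ) • x = 0 := by
  have h := hF x.toMul
  rw [pow_two] at h
  rw [two_nsmul]
  have hx : x + x = Additive.ofMul (x.toMul * x.toMul) := rfl
  rw [hx, h]; rfl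

lemma zmod_smul_hom (hF : ∀ a : F, a ^ 2 = 1) : True := trivial

/-- `Chi F` is in bijection with the `ZMod 2`-linear dual of `Additive F`. -/
lemma card_chi (hF : ∀ a : F, a ^ 2 = 1) : Fintype.card (Chi F) = Fintype.card F := by
  letI : Module (ZMod 2) (Additive F) := AddCommGroup.zmodModule (two_nsmul_additive hF)
  have hsmul : ∀ (f : Additive F →+ ZMod 2) (c : ZMod 2) (x : Additive F),
      f (c • x) = c • f x := by
    intro f c x
    have h1 : c • x = c.val • x := by
      conv_lhs => rw [← ZMod.natCast_rightInverse c]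
      rw [Nat.cast_smul_eq_nsmul]
    have h2 : c • f x = c.val • f x := by
      conv_lhs => rw [← ZMod.natCast_rightInverse c]
      rw [Nat.cast_smul_eq_nsmul]
    rw [h1, h2, map_nsmul]
  let E2 : (Additive F →+ ZMod 2) ≃ (Additive F →ₗ[ZMod 2] ZMod 2) :=
    { toFun := fun f => { toFun := f, map_add' := f.map_add, map_smul' := hsmul f }
      invFun := fun g => g.toAddMonoidHom
      left_inv := fun f => AddMonoidHom.ext fun x => rfl
      right_inv := fun g => LinearMap.ext fun x => rfl }
  let E : Chi F ≃ (Additive F →ₗ[ZMod 2] ZMod 2) := MonoidHom.toAdditiveLeft.trans E2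
  haveI : Finite (Additive F →ₗ[ZMod 2] ZMod 2) :=
    Finite.of_injective _ (DFunLike.coe_injective (F := Additive F →ₗ[ZMod 2] ZMod 2))
  letI : Fintype (Additive F →ₗ[ZMod 2] ZMod 2) := Fintype.ofFinite _
  haveI : Module.Finite (ZMod 2) (Additive F) := Module.Finite.of_finite
  rw [Fintype.card_congr E]
  rw [Module.card_eq_pow_finrank (K := ZMod 2) (V := Additive F →ₗ[ZMod 2] ZMod 2)]
  rw [Module.finrank_linearMap_self]
  rw [← Module.card_eq_pow_finrank (K := ZMod 2) (V := Additive F)]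
  exact Fintype.card_congr (Additive.ofMul (α := F)).symm

/-- separation: for `a ≠ 1` there is a character nontrivial on `a`. -/
lemma exists_sep (hF : ∀ a : F, a ^ 2 = 1) {a : F} (ha : a ≠ 1) :
    ∃ ψ : Chi F, ψ a ≠ 1 := by
  letI : Module (ZMod 2) (Additive F) := AddCommGroup.zmodModule (two_nsmul_additive hF)
  have hx : Additive.ofMul a ≠ (0 : Additive F) := ha
  obtain ⟨g, hg⟩ : ∃ g : Module.Dual (ZMod 2) (Additive F), g (Additive.ofMul a) ≠ 0 := by
    by_contra h
    push_neg at h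
    exact hx ((Module.forall_dual_apply_eq_zero_iff (ZMod 2) _).1 h)
  refine ⟨MonoidHom.toAdditiveLeft.symm g.toAddMonoidHom, fun h1 => hg ?_⟩
  have h2 : (MonoidHom.toAdditiveLeft.symm g.toAddMonoidHom) a
      = Multiplicative.ofAdd (g (Additive.ofMul a)) := rfl
  rw [h2] at h1
  exact (Multiplicative.ofAdd.injective (by simpa using h1))


section Field
variable (k : Type) [Field k]

/-- the idempotent attached to the character `φ` -/
noncomputable def eIdem (φ : Chi F) : MonoidAlgebra k F :=
  (Fintype.card F : k)⁻¹ • ∑ a : F, MonoidAlgebra.single a (sgn k (φ a))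

lemma eIdem_apply (φ : Chi F) (b : F) :
    (eIdem k φ).coeff b = (Fintype.card F : k)⁻¹ * sgn k (φ b) := by
  classical
  rw [eIdem, MonoidAlgebra.coeff_smul, Finsupp.smul_apply, MonoidAlgebra.coeff_sum, Finsupp.finset_sum_apply]
  congr 1
  simp only [MonoidAlgebra.coeff_single]
  rw [Finset.sum_eq_single b (fun a _ ha => Finsupp.single_eq_of_ne' ha)
    (fun h => absurd (Finset.mem_univ b) h)]
  exact Finsupp.single_eq_same

lemma chiK_mul (φ : Chi F) (a b : F) :
    sgn k (φ (a * b)) = sgn k (φ a) * sgn k (φ b) := by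
  rw [map_mul, map_mul]

lemma single_mul_eIdem (φ : Chi F) (b : F) (x : k) :
    MonoidAlgebra.single b x * eIdem k φ = (x * sgn k (φ b)) • eIdem k φ := by
  rw [eIdem, mul_smul_comm, Finset.mul_sum, smul_comm]
  congr 1
  rw [Finset.smul_sum]
  refine Fintype.sum_equiv (Equiv.mulLeft b) _ _ fun a => ?_
  rw [MonoidAlgebra.single_mul_single, MonoidAlgebra.smul_single']
  show MonoidAlgebra.single (b * a) (x * sgn k (φ a))
      = MonoidAlgebra.single (b * a) (x * sgn k (φ b) * sgn k (φ (b * a)))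
  congr 1
  rw [chiK_mul, show x * sgn k (φ b) * (sgn k (φ b) * sgn k (φ a))
      = x * ((sgn k (φ b) * sgn k (φ b)) * sgn k (φ a)) by ring, sgn_mul_self, one_mul]

lemma mapCoeffs_apply (c : Zhalf →+* k) (p : MonoidAlgebra Zhalf F) (b : F) :
    (mapCoeffs c p).coeff b = c (p.coeff b) := rfl

lemma mapCoeffs_eq_sum (c : Zhalf →+* k) (p : MonoidAlgebra Zhalf F) :
    mapCoeffs c p = ∑ b : F, MonoidAlgebra.single b (c (p.coeff b)) := by
  have h1 : mapCoeffs c p = (mapCoeffs c p).coeff.sum MonoidAlgebra.single :=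
    (MonoidAlgebra.sum_coeff_single _).symm
  rw [h1, Finsupp.sum_fintype]
  · rfl
  · intro a; exact MonoidAlgebra.single_zero a

lemma q_mul_eIdem (c : Zhalf →+* k) (p : MonoidAlgebra Zhalf F) (φ : Chi F) :
    mapCoeffs c p * eIdem k φ = c (Sval p φ) • eIdem k φ := by
  rw [mapCoeffs_eq_sum, Finset.sum_mul]
  have h1 : ∀ b : F, MonoidAlgebra.single b (c (p.coeff b)) * eIdem k φ
      = (c (p.coeff b) * sgn k (φ b)) • eIdem k φ := fun b => single_mul_eIdem k φ b _
  rw [Finset.sum_congr rfl fun b _ => h1 b, ← Finset.sum_smul]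
  congr 1
  rw [Sval_eq_sum, map_sum]
  exact Finset.sum_congr rfl fun b _ => by rw [map_mul, map_sgn c]

lemma sum_sgn_eq_zero (hF : ∀ a : F, a ^ 2 = 1) (h2 : (2 : k) ≠ 0) {b : F} (hb : b ≠ 1) :
    ∑ φ : Chi F, sgn k (φ b) = 0 := by
  obtain ⟨ψ, hψ⟩ := exists_sep hF hb
  have hneg : (-1 : k) ≠ 1 := fun h => h2 (by linear_combination -h)
  have hψs : sgn k (ψ b) = -1 := by
    rcases sgn_one_or k (ψ b) with h | h
    · exact absurd ((sgn_eq_one_iff hneg _).1 h) hψ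
    · exact h
  have key : ∑ φ : Chi F, sgn k ((φ * ψ) b) = ∑ φ : Chi F, sgn k (φ b) :=
    Equiv.sum_comp (Equiv.mulRight ψ) fun φ => sgn k (φ b)
  have key2 : ∀ φ : Chi F, sgn k ((φ * ψ) b) = sgn k (φ b) * sgn k (ψ b) := fun φ => by
    rw [MonoidHom.mul_apply, map_mul]
  rw [Finset.sum_congr rfl fun φ _ => key2 φ, ← Finset.sum_mul, hψs] at key
  have h3 : (2 : k) * ∑ φ : Chi F, sgn k (φ b) = 0 := by linear_combination -key
  exact (mul_eq_zero.1 h3).resolve_left h2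

lemma sum_eIdem (hF : ∀ a : F, a ^ 2 = 1) (h2 : (2 : k) ≠ 0)
    (hcard : (Fintype.card F : k) ≠ 0) :
    ∑ φ : Chi F, eIdem k φ = 1 := by
  apply MonoidAlgebra.ext
  apply Finsupp.ext
  intro b
  rw [MonoidAlgebra.coeff_sum, Finsupp.finset_sum_apply]
  rw [Finset.sum_congr rfl fun φ _ => eIdem_apply k φ b]
  rw [← Finset.mul_sum]
  rw [MonoidAlgebra.one_def, MonoidAlgebra.coeff_single]
  by_cases hb : b = 1
  · subst hb
    rw [Finset.sum_congr rfl fun (φ : Chi F) _ => by rw [map_one, map_one]]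
    rw [Finset.sum_const, nsmul_eq_mul, mul_one, Finsupp.single_eq_same]
    rw [Finset.card_univ, card_chi hF]
    exact inv_mul_cancel₀ hcard
  · rw [sum_sgn_eq_zero k hF h2 hb, mul_zero,
      Finsupp.single_eq_of_ne' fun h => hb h.symm]


lemma sgn_injective {K : Type*} [Ring K] (hneg : (-1 : K) ≠ 1) :
    Function.Injective (sgn K) := by
  intro z w h
  rcases mult_two_cases z with hz | hz <;> rcases mult_two_cases w with hw | hw <;>
      subst hz <;> subst hw
  · rfl
  · rw [sgn_ofAdd_one, (sgn K).map_one] at h; exact absurd h.symm hneg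
  · rw [sgn_ofAdd_one, (sgn K).map_one] at h; exact absurd h hneg
  · rfl

lemma chiK_injective (hneg : (-1 : k) ≠ 1) :
    Function.Injective (chiK k (F := F)) := by
  intro φ φ' h
  ext a
  exact sgn_injective hneg (DFunLike.congr_fun h a)

lemma eIdem_li (hneg : (-1 : k) ≠ 1) (hcard : (Fintype.card F : k) ≠ 0) :
    LinearIndependent k (fun φ : Chi F => eIdem k φ) := by
  have li1 : LinearIndependent k (fun φ : Chi F => ⇑(chiK k φ)) :=
    (linearIndependent_monoidHom F k).comp (chiK k) (chiK_injective k hneg)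
  set u : kˣ := Units.mk0 _ (inv_ne_zero hcard) with hu
  have li2 := li1.units_smul fun _ => u
  apply LinearIndependent.of_comp ({ toFun := fun x => ⇑x.coeff, map_add' := fun _ _ => rfl, map_smul' := fun _ _ => rfl } : MonoidAlgebra k F →ₗ[k] (F → k))
  have he : (⇑({ toFun := fun x => ⇑x.coeff, map_add' := fun _ _ => rfl, map_smul' := fun _ _ => rfl } : MonoidAlgebra k F →ₗ[k] (F → k)) ∘ fun φ : Chi F => eIdem k φ)
      = ((fun _ : Chi F => u) • fun φ : Chi F => ⇑(chiK k φ)) := by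
    funext φ
    funext b
    show (eIdem k φ).coeff b = u • (chiK k φ b)
    rw [eIdem_apply, Units.smul_def, hu, Units.val_mk0, smul_eq_mul]
    rfl
  rw [he]
  exact li2

lemma card_F_pow (hF : ∀ a : F, a ^ 2 = 1) : ∃ n, Fintype.card F = 2 ^ n := by
  letI : Module (ZMod 2) (Additive F) := AddCommGroup.zmodModule (two_nsmul_additive hF)
  refine ⟨Module.finrank (ZMod 2) (Additive F), ?_⟩
  have h := Module.card_eq_pow_finrank (K := ZMod 2) (V := Additive F)
  rw [ZMod.card] at h
  rw [← h]
  exact Fintype.card_congr (Additive.ofMul (α := F))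

lemma span_eq (hF : ∀ a : F, a ^ 2 = 1) {p : MonoidAlgebra Zhalf F} (hp : p * p = p)
    (h2 : (2 : k) ≠ 0) (hcard : (Fintype.card F : k) ≠ 0) (c : Zhalf →+* k) :
    Submodule.span k (Set.range fun a : F =>
        mapCoeffs c p * MonoidAlgebra.single a (1 : k))
      = Submodule.span k (Set.range fun φ : {φ : Chi F // Sval p φ = 1} =>
          eIdem k (φ : Chi F)) := by
  have hq1 : mapCoeffs c p = ∑ φ : Chi F, c (Sval p φ) • eIdem k φ := by
    calc mapCoeffs c p = mapCoeffs c p * ∑ φ : Chi F, eIdem k φ := by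
          rw [sum_eIdem k hF h2 hcard, mul_one]
      _ = ∑ φ : Chi F, c (Sval p φ) • eIdem k φ := by
          rw [Finset.mul_sum]
          exact Finset.sum_congr rfl fun φ _ => q_mul_eIdem k c p φ
  apply le_antisymm <;> rw [Submodule.span_le] <;> rintro - ⟨x, rfl⟩
  · show mapCoeffs c p * MonoidAlgebra.single x 1 ∈ _
    have hq : mapCoeffs c p * MonoidAlgebra.single x (1 : k)
        = ∑ φ : Chi F, (c (Sval p φ) * sgn k (φ x)) • eIdem k φ := by
      rw [hq1, Finset.sum_mul]
      refine Finset.sum_congr rfl fun φ _ => ?_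
      rw [smul_mul_assoc, mul_comm (eIdem k φ) (MonoidAlgebra.single x (1 : k)),
        single_mul_eIdem, one_mul, smul_smul]
    rw [hq]
    apply Submodule.sum_mem
    intro φ _
    rcases Sval_idem hp φ with h0 | h1
    · rw [h0, map_zero, zero_mul, zero_smul]
      exact Submodule.zero_mem _
    · exact Submodule.smul_mem _ _ (Submodule.subset_span ⟨⟨φ, h1⟩, rfl⟩)
  · show eIdem k (x : Chi F) ∈ _
    have he : eIdem k (x : Chi F) = mapCoeffs c p * eIdem k (x : Chi F) := by
      rw [q_mul_eIdem, x.2, map_one, one_smul]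
    rw [he, eIdem, mul_smul_comm]
    apply Submodule.smul_mem
    rw [Finset.mul_sum]
    apply Submodule.sum_mem
    intro a _
    have hs : MonoidAlgebra.single a (sgn k ((x : Chi F) a))
        = sgn k ((x : Chi F) a) • MonoidAlgebra.single a (1 : k) := by
      rw [MonoidAlgebra.smul_single', mul_one]
    rw [hs, mul_smul_comm]
    exact Submodule.smul_mem _ _ (Submodule.subset_span ⟨a, rfl⟩)

end Field
end S14


open S14 in
/-- STATEMENT 14: for a finite abelian group `F` of exponent dividing 2, an idempotent
`p ∈ ℤ[1/2][F]` and a field `k` with `char k ≠ 2`, the `k`-dimension of the span of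
`{ρ(p)·a : a ∈ F}` in `k[F]` equals the number of homomorphisms `χ : F → {1,−1}` with
`Σ_{a∈F} p_a·χ(a) = 1`. -/
theorem statement14 (F : Type) [CommGroup F] [Fintype F] (hF : ∀ a : F, a ^ 2 = 1)
    (p : MonoidAlgebra Zhalf F) (hp : p * p = p)
    (k : Type) [Field k] (hchar : ringChar k ≠ 2) (c : Zhalf →+* k) :
    Module.finrank k
        (Submodule.span k (Set.range fun a : F =>
          mapCoeffs c p * MonoidAlgebra.single a (1 : k))) =
      Nat.card {χ : F →* ℚ //
        (∀ a : F, χ a = 1 ∨ χ a = -1) ∧ ∑ a : F, ((p.coeff a : ℚ) * χ a) = 1} := by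
  classical
  rw [card_eq hF p]
  have h2 : (2 : k) ≠ 0 := Ring.two_ne_zero hchar
  have hneg : (-1 : k) ≠ 1 := Ring.neg_one_ne_one_of_char_ne_two hchar
  obtain ⟨n, hn⟩ := card_F_pow hF
  have hcard : (Fintype.card F : k) ≠ 0 := by
    rw [hn]; push_cast; exact pow_ne_zero n h2
  rw [span_eq k hF hp h2 hcard c]
  letI : Fintype {φ : Chi F // Sval p φ = 1} := Subtype.fintype _
  have li := (eIdem_li k hneg hcard).comp
    (Subtype.val : {φ : Chi F // Sval p φ = 1} → Chi F) Subtype.val_injective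
  exact (finrank_span_eq_card li).trans Nat.card_eq_fintype_card.symm
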